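/- Let F : H → H be a monotone operator, a > 0, δ ≥ 0, y ∈ H with F(y) = f, and f_δ ∈ H with ‖f − f_δ‖ ≤ δ. If V_δ ∈ H satisfies F(V_δ) + aV_δ = f_δ, then a‖V_δ − y‖ ≤ a‖y‖ + δ; consequently ‖V_δ‖ ≤ 2‖y‖ + δ/a. -/

import Mathlib

open scoped RealInnerProductSpace

theorem stmt6 {H : Type*} [NormedAddCommGroup H] [InnerProductSpace ℝ H]
    (F : H → H) (hF : ∀ u v : H, 0 ≤ ⟪F u - F v, u - v⟫)
    (a δ : ℝ) (ha : 0 < a) (hδ : 0 ≤ δ)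
    (y f fδ : H) (hFy : F y = f) (hfδ : ‖f - fδ‖ ≤ δ)
    (Vδ : H) (hVδ : F Vδ + a • Vδ = fδ) :
    a * ‖Vδ - y‖ ≤ a * ‖y‖ + δ ∧ ‖Vδ‖ ≤ 2 * ‖y‖ + δ / a := by
  have key : F Vδ - F y = (fδ - f) - a • Vδ := by
    rw [hFy]; rw [eq_sub_of_add_eq hVδ]; abel
  have h0 := hF Vδ y
  rw [key] at h0
  have h1 : a * ⟪Vδ, Vδ - y⟫ ≤ ⟪fδ - f, Vδ - y⟫ := by
    rw [inner_sub_left, real_inner_smul_left] at h0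
    linarith
  have h2 : ⟪Vδ, Vδ - y⟫ = ‖Vδ - y‖ ^ 2 + ⟪y, Vδ - y⟫ := by
    rw [← real_inner_self_eq_norm_sq, ← inner_add_left, sub_add_cancel]
  have hcs1 : ⟪fδ - f, Vδ - y⟫ ≤ δ * ‖Vδ - y‖ := by
    calc ⟪fδ - f, Vδ - y⟫ ≤ ‖fδ - f‖ * ‖Vδ - y‖ := real_inner_le_norm _ _
    _ ≤ δ * ‖Vδ - y‖ := by
        apply mul_le_mul_of_nonneg_right _ (norm_nonneg _)
        rw [norm_sub_rev]; exact hfδ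
  have hcs2 : -⟪y, Vδ - y⟫ ≤ ‖y‖ * ‖Vδ - y‖ := by
    calc -⟪y, Vδ - y⟫ = ⟪-y, Vδ - y⟫ := by rw [inner_neg_left]
    _ ≤ ‖-y‖ * ‖Vδ - y‖ := real_inner_le_norm _ _
    _ = ‖y‖ * ‖Vδ - y‖ := by rw [norm_neg]
  have hquad : a * ‖Vδ - y‖ ^ 2 ≤ (a * ‖y‖ + δ) * ‖Vδ - y‖ := by
    nlinarith [h1, h2, hcs1, hcs2]
  have first : a * ‖Vδ - y‖ ≤ a * ‖y‖ + δ := by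
    rcases eq_or_lt_of_le (norm_nonneg (Vδ - y)) with h | h
    · rw [← h]; nlinarith [norm_nonneg y]
    · nlinarith
  refine ⟨first, ?_⟩
  have h3 : ‖Vδ - y‖ ≤ ‖y‖ + δ / a := by
    rw [← mul_le_mul_iff_right₀ ha]
    calc a * ‖Vδ - y‖ ≤ a * ‖y‖ + δ := first
    _ = a * (‖y‖ + δ / a) := by field_simp
  calc ‖Vδ‖ = ‖(Vδ - y) + y‖ := by rw [sub_add_cancel]
  _ ≤ ‖Vδ - y‖ + ‖y‖ := norm_add_le _ _
  _ ≤ 2 * ‖y‖ + δ / a := by linarith
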